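/- If H is a numerical semigroup with n₁(H) ≥ 3, then w(H) ≤ (g(H)² - 3g(H) + 4)/2. -/

import Mathlib

private lemma sub_notin {H : Set ℕ} (hadd : ∀ a ∈ H, ∀ b ∈ H, a + b ∈ H)
    {m a : ℕ} (hm : m ∉ H) (ha : a ∈ H) (hle : a ≤ m) : m - a ∉ H := by
  intro h
  have := hadd a ha (m - a) h
  rw [Nat.add_sub_cancel' hle] at this
  exact hm this

private lemma gap_lb {H : Set ℕ} [DecidablePred fun n : ℕ => n ∈ H]
    [DecidablePred fun n : ℕ => n ∉ H]
    (hadd : ∀ a ∈ H, ∀ b ∈ H, a + b ∈ H)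
    (m k e : ℕ) (hm : m ∉ H) (he : e ∉ H) (hek : k < e) (hem : e < m)
    (hmk : 2 * k ≤ m) (hme : m - e ∉ H) (hk2 : m - k ≤ k → m - k ∉ H) :
    k + 1 ≤ Nat.count (fun n : ℕ => n ∉ H) m := by
  rw [Nat.count_eq_card_filter_range]
  set G : ℕ → ℕ := fun a => if a ∈ H then m - a else a with hG
  have hmaps : ∀ a ∈ Finset.Icc 1 k,
      G a ∈ (Finset.range m).filter (fun n : ℕ => n ∉ H) := by
    intro a ha
    simp only [Finset.mem_Icc] at ha
    simp only [hG, Finset.mem_filter, Finset.mem_range]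
    by_cases h : a ∈ H
    · simp only [if_pos h]
      exact ⟨by omega, sub_notin hadd hm h (by omega)⟩
    · simp only [if_neg h]
      exact ⟨by omega, h⟩
  have hinj : Set.InjOn G (Finset.Icc 1 k) := by
    intro a ha b hb hab
    simp only [Finset.coe_Icc, Set.mem_Icc] at ha hb
    simp only [hG] at hab
    by_cases h1 : a ∈ H <;> by_cases h2 : b ∈ H
    · rw [if_pos h1, if_pos h2] at hab; omega
    · rw [if_pos h1, if_neg h2] at hab
      exfalso
      have hamk : a = m - k := by omega
      exact hk2 (by omega) (hamk ▸ h1)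
    · rw [if_neg h1, if_pos h2] at hab
      exfalso
      have hbmk : b = m - k := by omega
      exact hk2 (by omega) (hbmk ▸ h2)
    · rwa [if_neg h1, if_neg h2] at hab
  have hsub : insert e ((Finset.Icc 1 k).image G) ⊆
      (Finset.range m).filter (fun n : ℕ => n ∉ H) := by
    intro x hx
    rcases Finset.mem_insert.mp hx with rfl | hx
    · simp only [Finset.mem_filter, Finset.mem_range]
      exact ⟨hem, he⟩
    · rcases Finset.mem_image.mp hx with ⟨a, ha, rfl⟩
      exact hmaps a ha
  have hnotmem : e ∉ (Finset.Icc 1 k).image G := by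
    intro hx
    rcases Finset.mem_image.mp hx with ⟨a, ha, hae⟩
    simp only [Finset.mem_Icc] at ha
    by_cases h : a ∈ H
    · simp only [hG, if_pos h] at hae
      have hame : a = m - e := by omega
      exact hme (hame ▸ h)
    · simp only [hG, if_neg h] at hae
      omega
  calc k + 1 = (insert e ((Finset.Icc 1 k).image G)).card := by
        rw [Finset.card_insert_of_notMem hnotmem,
          Finset.card_image_of_injOn hinj, Nat.card_Icc]
        omega
    _ ≤ _ := Finset.card_le_card hsub

private lemma sum_pred_bound : ∀ g : ℕ,
    2 * (∑ i ∈ Finset.range g, (i - 1)) + 3 * g ≤ g * g + 2 := by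
  intro g
  induction g with
  | zero => simp
  | succ n ih =>
    rw [Finset.sum_range_succ]
    rcases n with _ | m
    · simp
    · have e2 : (m + 1 + 1) * (m + 1 + 1) = (m + 1) * (m + 1) + 2 * m + 3 := by ring
      have e1 : m + 1 - 1 = m := rfl
      rw [e1, e2]
      linarith [ih]

/-- If `H` is a numerical semigroup with multiplicity `n₁(H) ≥ 3`, then its
weight satisfies `w(H) ≤ (g(H)² - 3g(H) + 4)/2`. -/
theorem stmt3 (H : Set ℕ) (h0 : (0 : ℕ) ∈ H)
    (hadd : ∀ a ∈ H, ∀ b ∈ H, a + b ∈ H)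
    (hfin : (Hᶜ : Set ℕ).Finite)
    (g w : ℕ) (hg : g = Set.ncard (Hᶜ : Set ℕ))
    (hw : w = ∑ i ∈ Finset.range g, (Nat.nth (fun n => n ∉ H) i - (i + 1)))
    (hn1 : 3 ≤ Nat.nth (fun n => 0 < n ∧ n ∈ H) 0) :
    (w : ℤ) ≤ ((g : ℤ) ^ 2 - 3 * (g : ℤ) + 4) / 2 := by
  classical
  have hfinp : (setOf fun n : ℕ => n ∉ H).Finite := hfin
  have hcard : hfinp.toFinset.card = g := by
    have hg' : g = (setOf fun n : ℕ => n ∉ H).ncard := hg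
    rw [hg', Set.ncard_eq_toFinset_card _ hfinp]
  have h1 : (1 : ℕ) ∉ H := by
    intro h
    have : Nat.nth (fun n => 0 < n ∧ n ∈ H) 0 ≤ 1 := by
      rw [Nat.nth_zero]
      exact Nat.sInf_le ⟨one_pos, h⟩
    omega
  have h2 : (2 : ℕ) ∉ H := by
    intro h
    have : Nat.nth (fun n => 0 < n ∧ n ∈ H) 0 ≤ 2 := by
      rw [Nat.nth_zero]
      exact Nat.sInf_le ⟨two_pos, h⟩
    omega
  have hnth : ∀ i < g, Nat.nth (fun n => n ∉ H) i ∉ H := fun i hi =>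
    Nat.nth_mem_of_lt_card hfinp (lt_of_lt_of_eq hi hcard.symm)
  have hcount : ∀ i < g, Nat.count (fun n : ℕ => n ∉ H) (Nat.nth (fun n => n ∉ H) i) = i :=
    fun i hi => Nat.count_nth_of_lt_card_finite hfinp (lt_of_lt_of_eq hi hcard.symm)
  -- the pairing bound : nth i ≤ 2 i + 1
  have L3 : ∀ i < g, Nat.nth (fun n => n ∉ H) i ≤ 2 * i + 1 := by
    intro i hi
    set ℓ := Nat.nth (fun n => n ∉ H) i with hℓdef
    have hℓH : ℓ ∉ H := hnth i hi
    have hcnt : ((Finset.range ℓ).filter fun n : ℕ => n ∉ H).card = i := by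
      rw [← Nat.count_eq_card_filter_range]
      exact hcount i hi
    set f : ℕ → ℕ := fun a => if a ∈ H then ℓ - a else a with hf
    have himg : (Finset.Ioo 0 ℓ).image f ⊆ (Finset.range ℓ).filter fun n : ℕ => n ∉ H := by
      intro b hb
      rcases Finset.mem_image.mp hb with ⟨a, ha, rfl⟩
      simp only [Finset.mem_Ioo] at ha
      simp only [hf, Finset.mem_filter, Finset.mem_range]
      by_cases h : a ∈ H
      · simp only [if_pos h]
        exact ⟨by omega, sub_notin hadd hℓH h (by omega)⟩
      · simp only [if_neg h]
        exact ⟨ha.2, h⟩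
    have hfib : ∀ b ∈ (Finset.Ioo 0 ℓ).image f,
        ((Finset.Ioo 0 ℓ).filter fun a => f a = b).card ≤ 2 := by
      intro b _
      have hsub2 : (Finset.Ioo 0 ℓ).filter (fun a => f a = b) ⊆ {b, ℓ - b} := by
        intro a ha
        simp only [Finset.mem_filter, Finset.mem_Ioo, hf] at ha
        simp only [Finset.mem_insert, Finset.mem_singleton]
        by_cases h : a ∈ H
        · rw [if_pos h] at ha; omega
        · rw [if_neg h] at ha; omega
      calc ((Finset.Ioo 0 ℓ).filter fun a => f a = b).card ≤ ({b, ℓ - b} : Finset ℕ).card :=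
            Finset.card_le_card hsub2
        _ ≤ 2 := (Finset.card_insert_le _ _).trans (by simp)
    have hcard2 : (Finset.Ioo 0 ℓ).card ≤ 2 * ((Finset.Ioo 0 ℓ).image f).card :=
      Finset.card_le_mul_card_image _ 2 hfib
    have hle := Finset.card_le_card himg
    rw [Nat.card_Ioo] at hcard2
    omega
  -- the refined bound : nth i ≤ 2 i   for 1 ≤ i, i + 1 < g
  have L4 : ∀ i, 1 ≤ i → i + 1 < g → Nat.nth (fun n => n ∉ H) i ≤ 2 * i := by
    intro i h1i hig
    by_contra hcon
    have hi : i < g := by omega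
    have heq : Nat.nth (fun n => n ∉ H) i = 2 * i + 1 :=
      le_antisymm (L3 i hi) (by omega)
    have hlt : Nat.nth (fun n => n ∉ H) i < Nat.nth (fun n => n ∉ H) (i + 1) :=
      Nat.nth_lt_nth_of_lt_card hfinp (by omega) (lt_of_lt_of_eq hig hcard.symm)
    have hub : Nat.nth (fun n => n ∉ H) (i + 1) ≤ 2 * (i + 1) + 1 := L3 (i + 1) hig
    have hgap' : Nat.nth (fun n => n ∉ H) (i + 1) ∉ H := hnth (i + 1) hig
    have hgapi : (2 * i + 1) ∉ H := heq ▸ hnth i hi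
    have hcnt' : Nat.count (fun n : ℕ => n ∉ H) (Nat.nth (fun n => n ∉ H) (i + 1)) = i + 1 :=
      hcount (i + 1) hig
    have hgapk : 2 * (i + 1) - 1 ∉ H := by
      have : 2 * (i + 1) - 1 = 2 * i + 1 := by omega
      rw [this]; exact hgapi
    rcases (by omega : Nat.nth (fun n => n ∉ H) (i + 1) = 2 * (i + 1) ∨
        Nat.nth (fun n => n ∉ H) (i + 1) = 2 * (i + 1) + 1) with hc | hc
    · -- case nth (i+1) = 2k
      have hkH : (i + 1) ∈ H := by
        by_contra hkH
        have hge := gap_lb hadd (2 * (i + 1)) (i + 1) (2 * (i + 1) - 1)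
          (hc ▸ hgap') hgapk (by omega) (by omega) (by omega)
          (by have : 2 * (i + 1) - (2 * (i + 1) - 1) = 1 := by omega
              rw [this]; exact h1)
          (by intro _
              have : 2 * (i + 1) - (i + 1) = i + 1 := by omega
              rw [this]; exact hkH)
        rw [← hc] at hge
        omega
      have h2k : 2 * (i + 1) ∈ H := by
        rw [two_mul]; exact hadd _ hkH _ hkH
      exact (hc ▸ hgap') h2k
    · -- case nth (i+1) = 2k + 1
      have hge := gap_lb hadd (2 * (i + 1) + 1) (i + 1) (2 * (i + 1) - 1)
        (hc ▸ hgap') hgapk (by omega) (by omega) (by omega)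
        (by have : 2 * (i + 1) + 1 - (2 * (i + 1) - 1) = 2 := by omega
            rw [this]; exact h2)
        (by omega)
      rw [← hc] at hge
      omega
  -- put the bounds together
  rcases Nat.eq_zero_or_pos g with hg0 | hgpos
  · subst hg0
    simp only [Finset.range_zero, Finset.sum_empty] at hw
    subst hw
    norm_num
  · have hbound : ∀ i ∈ Finset.range g,
        Nat.nth (fun n => n ∉ H) i - (i + 1) ≤ (i - 1) + (if i = g - 1 then 1 else 0) := by
      intro i hi
      rw [Finset.mem_range] at hi
      by_cases hlast : i = g - 1
      · have := L3 i hi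
        rw [if_pos hlast]
        omega
      · rw [if_neg hlast]
        by_cases hi0 : i = 0
        · subst hi0
          have h01 : Nat.nth (fun n : ℕ => n ∉ H) 0 ≤ 1 := by
            rw [Nat.nth_zero]
            exact Nat.sInf_le h1
          omega
        · have := L4 i (by omega) (by omega)
          omega
    have hwle : w ≤ (∑ i ∈ Finset.range g, (i - 1)) + 1 := by
      rw [hw]
      calc ∑ i ∈ Finset.range g, (Nat.nth (fun n => n ∉ H) i - (i + 1))
          ≤ ∑ i ∈ Finset.range g, ((i - 1) + if i = g - 1 then 1 else 0) :=
            Finset.sum_le_sum hbound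
        _ = (∑ i ∈ Finset.range g, (i - 1)) +
              ∑ i ∈ Finset.range g, (if i = g - 1 then 1 else 0) :=
            Finset.sum_add_distrib
        _ = (∑ i ∈ Finset.range g, (i - 1)) + 1 := by
            rw [Finset.sum_ite_eq' (Finset.range g) (g - 1) (fun _ => 1),
              if_pos (Finset.mem_range.mpr (by omega))]
    have hkey : 2 * w + 3 * g ≤ g * g + 4 := by
      have := sum_pred_bound g
      omega
    rw [Int.le_ediv_iff_mul_le (by norm_num : (0:ℤ) < 2)]
    have hcast : (2 * w + 3 * g : ℤ) ≤ ((g : ℤ) * g + 4 : ℤ) := by exact_mod_cast hkey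
    nlinarith [hcast]
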